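/- arXiv:1503.01389 — 2 statements merged into one kernel-verified Lean document; each statement's English description precedes it below -/
import Mathlib

section
/- For a ±-cochain complex X = {Xⁿ, d⁺ₙ, d⁻ₙ} of commutative monoids, the relation ρⁿ on Zⁿ(X) defined by x ρⁿ y iff there exist u, v ∈ Xⁿ⁻¹ with x + d⁺ₙ₋₁(u) + d⁻ₙ₋₁(v) = y + d⁺ₙ₋₁(v) + d⁻ₙ₋₁(u) is an equivalence relation compatible with addition (a congruence). -/
/-- For a ±-cochain complex of commutative monoids, the relation `ρ` on the cocycles
(`x ρ y ↔ ∃ u v, x + d⁺u + d⁻v = y + d⁺v + d⁻u`) is an equivalence relation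
compatible with addition, i.e. a congruence. -/
theorem stmt7 (X : ℤ → Type*) [∀ n, AddCommMonoid (X n)]
    (dp dm : ∀ n, X n →+ X (n + 1))
    (hcx : ∀ (n : ℤ) (x : X n),
      dp (n + 1) (dp n x) + dm (n + 1) (dm n x)
        = dm (n + 1) (dp n x) + dp (n + 1) (dm n x)) (n : ℤ) :
    let Zc : Set (X (n + 1)) := {x | dp (n + 1) x = dm (n + 1) x}
    let r : X (n + 1) → X (n + 1) → Prop := fun x y =>
      ∃ u v : X n, x + dp n u + dm n v = y + dp n v + dm n u
    (∀ x ∈ Zc, r x x) ∧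
    (∀ x ∈ Zc, ∀ y ∈ Zc, r x y → r y x) ∧
    (∀ x ∈ Zc, ∀ y ∈ Zc, ∀ z ∈ Zc, r x y → r y z → r x z) ∧
    (∀ x ∈ Zc, ∀ y ∈ Zc, ∀ x' ∈ Zc, ∀ y' ∈ Zc,
      r x y → r x' y' → r (x + x') (y + y')) := by
  intro Zc r
  refine ⟨?_, ?_, ?_, ?_⟩
  · exact fun x _ => ⟨0, 0, rfl⟩
  · rintro x _ y _ ⟨u, v, h⟩
    exact ⟨v, u, h.symm⟩
  · rintro x _ y _ z _ ⟨u, v, h1⟩ ⟨u', v', h2⟩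
    refine ⟨u + u', v + v', ?_⟩
    have : x + dp n u + dm n v + (dp n u' + dm n v')
        = z + dp n v' + dm n u' + (dp n v + dm n u) := by
      rw [h1]
      calc y + dp n v + dm n u + (dp n u' + dm n v')
          = y + dp n u' + dm n v' + (dp n v + dm n u) := by abel
        _ = z + dp n v' + dm n u' + (dp n v + dm n u) := by rw [h2]
    calc x + dp n (u + u') + dm n (v + v')
        = x + dp n u + dm n v + (dp n u' + dm n v') := by
          simp only [map_add]; abel
      _ = z + dp n v' + dm n u' + (dp n v + dm n u) := this
      _ = z + dp n (v + v') + dm n (u + u') := by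
          simp only [map_add]; abel
  · rintro x _ y _ x' _ y' _ ⟨u, v, h1⟩ ⟨u', v', h2⟩
    refine ⟨u + u', v + v', ?_⟩
    calc x + x' + dp n (u + u') + dm n (v + v')
        = (x + dp n u + dm n v) + (x' + dp n u' + dm n v') := by
          simp only [map_add]; abel
      _ = (y + dp n v + dm n u) + (y' + dp n v' + dm n u') := by rw [h1, h2]
      _ = y + y' + dp n (v + v') + dm n (u + u') := by
          simp only [map_add]; abel
end

section
/- Let I be a finite linearly ordered set and let (Mᵢⱼ)_{i<j} be the family with Mᵢⱼ = {q·Tⁿ : q ∈ Gˣ, n ∈ ℤ} ≅ Gˣ × ℤ for an abelian group Gˣ. Consider 1-cochains x = (a_{ij}) with a_{ij} = (q_{ij}, n_{ij}) ∈ Gˣ × ℤ satisfying the cocycle condition a_{ik} = a_{ij}·a_{jk} componentwise on triple overlaps, which forces q_{ik} = q_{ij}q_{jk} and n_{ij} = n_{jk} = n_{ik} for all i<j<k. Then two cocycles x = (q_{ij}, n_{ij}) and y = (q'_{ij}, n'_{ij}) are cohomologous (∃ (uᵢ),(vᵢ) ∈ ∏ᵢ Gˣ with q_{ij}·uᵢ·vⱼ·(q'_{ij})⁻¹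 = uⱼ·vᵢ and n_{ij} = n'_{ij}) if and only if n_{ij} = n'_{ij} for all i<j. Consequently the first Čech cohomology group of this complex is isomorphic to ℤ. -/
section aux

variable {I : Type*} [LinearOrder I]

private lemma auxA (n : I → I → ℤ)
    (h : ∀ i j k : I, i < j → j < k → n i j = n j k ∧ n i k = n i j)
    (i j k : I) (hij : i < j) (hik : i < k) : n i j = n i k := by
  rcases lt_trichotomy j k with h1 | h1 | h1
  · exact (h i j k hij h1).2.symm
  · rw [h1]
  · exact (h i k j hik h1).2

private lemma auxB (n : I → I → ℤ)
    (h : ∀ i j k : I, i < j → j < k → n i j = n j k ∧ n i k = n i j)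
    (i j k : I) (hik : i < k) (hjk : j < k) : n i k = n j k := by
  rcases lt_trichotomy i j with h1 | h1 | h1
  · have h2 := h i j k h1 hjk
    rw [h2.2, h2.1]
  · rw [h1]
  · have h2 := h j i k h1 hik
    rw [h2.2, h2.1]

end aux

/-- Model of `Ȟ¹(ℙⁿ, O*)` with the standard cover: 1-cocycles with values in
`Gˣ × ℤ` over a finite linearly ordered index set. Two cocycles are cohomologous
iff their `ℤ`-components agree; consequently the first Čech cohomology is `ℤ`. -/
theorem stmt18 (G : Type*) [CommGroup G] (I : Type*) [LinearOrder I] [Fintype I]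
    (i₀ i₁ : I) (h01 : i₀ < i₁) :
    let Z := {x : (I → I → G) × (I → I → ℤ) // ∀ i j k : I, i < j → j < k →
      x.1 i k = x.1 i j * x.1 j k ∧ x.2 i j = x.2 j k ∧ x.2 i k = x.2 i j}
    let r : Z → Z → Prop := fun x y =>
      ∃ u v : I → G,
        (∀ i j : I, i < j → x.1.1 i j * u i * v j = y.1.1 i j * u j * v i) ∧
        (∀ i j : I, i < j → x.1.2 i j = y.1.2 i j)
    (∀ x y : Z, r x y ↔ ∀ i j : I, i < j → x.1.2 i j = y.1.2 i j) ∧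
      Nonempty (Quot r ≃ ℤ) := by
  intro Z r
  have hne : (Finset.univ : Finset I).Nonempty := ⟨i₀, Finset.mem_univ _⟩
  set m : I := Finset.univ.min' hne with hm
  have hmle : ∀ i : I, m ≤ i := fun i => Finset.min'_le _ _ (Finset.mem_univ i)
  -- constancy of the integer component
  have hconst : ∀ x : Z, ∀ i j i' j' : I, i < j → i' < j' →
      x.1.2 i j = x.1.2 i' j' := by
    intro x i j i' j' hij hij'
    have hn : ∀ a b c : I, a < b → b < c → x.1.2 a b = x.1.2 b c ∧
        x.1.2 a c = x.1.2 a b := fun a b c hab hbc =>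
      ⟨(x.2 a b c hab hbc).2.1, (x.2 a b c hab hbc).2.2⟩
    have hmj : m < j := lt_of_le_of_lt (hmle i) hij
    have hmj' : m < j' := lt_of_le_of_lt (hmle i') hij'
    calc x.1.2 i j = x.1.2 m j := auxB _ hn i m j hij hmj
      _ = x.1.2 m j' := auxA _ hn m j j' hmj hmj'
      _ = x.1.2 i' j' := (auxB _ hn i' m j' hij' hmj').symm
  have hiff : ∀ x y : Z, r x y ↔ ∀ i j : I, i < j → x.1.2 i j = y.1.2 i j := by
    intro x y
    constructor
    · rintro ⟨u, v, _, h2⟩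
      exact h2
    · intro h
      refine ⟨fun i => if hmi : m < i then x.1.1 m i * (y.1.1 m i)⁻¹ else 1,
        fun _ => 1, ?_, h⟩
      intro i j hij
      have hmj : m < j := lt_of_le_of_lt (hmle i) hij
      rcases eq_or_lt_of_le (hmle i) with hmi | hmi
      · subst hmi
        simp only [dif_pos hmj, dif_neg (lt_irrefl m), mul_one]
        rw [mul_comm (y.1.1 m j), mul_assoc, inv_mul_cancel, mul_one]
      · have hx := (x.2 m i j hmi hij).1
        have hy := (y.2 m i j hmi hij).1
        simp only [dif_pos hmi, dif_pos hmj, mul_one, hx, hy, mul_inv]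
        simp only [mul_comm, mul_left_comm, mul_assoc, inv_mul_cancel_left,
          mul_inv_cancel_left]
  refine ⟨hiff, ?_⟩
  have hr : ∀ a b : Z, r a b → a.1.2 i₀ i₁ = b.1.2 i₀ i₁ := by
    rintro a b ⟨u, v, _, h2⟩
    exact h2 i₀ i₁ h01
  refine ⟨Equiv.ofBijective (Quot.lift (fun x : Z => x.1.2 i₀ i₁) hr) ⟨?_, ?_⟩⟩
  · intro a b
    induction a using Quot.ind with
    | _ a =>
      induction b using Quot.ind with
      | _ b =>
        intro hab
        apply Quot.sound
        rw [hiff]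
        intro i j hij
        calc a.1.2 i j = a.1.2 i₀ i₁ := hconst a i j i₀ i₁ hij h01
          _ = b.1.2 i₀ i₁ := hab
          _ = b.1.2 i j := hconst b i₀ i₁ i j h01 hij
  · intro n
    exact ⟨Quot.mk r ⟨(fun _ _ => 1, fun _ _ => n), by
      intro i j k _ _; simp⟩, rfl⟩
end
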